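/- Let X be a second countable Hausdorff topological space and let Γ be a second countable, locally compact, Hausdorff, abelian topological group that is not compact, acting continuously on X. Then (X, Γ) is weak mixing if and only if (X, Γ) is thick strong mixing. -/

import Mathlib

open Pointwise

/-- A subset `N` of a group `G` is thick if for every finite subset `F ⊆ G`,
`N ∩ ⋂_{γ ∈ F} γN ≠ ∅`. -/
def IsThick {G : Type*} [Group G] (N : Set G) : Prop :=
  ∀ F : Finset G, (N ∩ ⋂ γ ∈ F, γ • N).Nonempty

/-- `N(A, B) = {γ ∈ G : γA ∩ B ≠ ∅}`. -/
def NSet (G : Type*) {X : Type*} [Group G] [MulAction G X] (A B : Set X) : Set G :=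
  {γ : G | ((γ • A) ∩ B).Nonempty}

/-- The system `(X, G)` is `k`-transitive: for all nonempty open sets
`U₁, …, U_k, V₁, …, V_k ⊆ X` there is `γ ∈ G` with `γUᵢ ∩ Vᵢ ≠ ∅` for all `i`. -/
def IsKTrans (G : Type*) (X : Type*) [Group G] [TopologicalSpace X] [MulAction G X]
    (k : ℕ) : Prop :=
  ∀ U V : Fin k → Set X, (∀ i, IsOpen (U i)) → (∀ i, (U i).Nonempty) →
    (∀ i, IsOpen (V i)) → (∀ i, (V i).Nonempty) →
    ∃ γ : G, ∀ i, ((γ • U i) ∩ V i).Nonempty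

/-- The system `(X, G)` is thick strong mixing: there is a thick `N ⊆ G` such that for every
pair of nonempty open `U, V ⊆ X` there is a compact `F ⊆ N` with `γU ∩ V ≠ ∅` for all
`γ ∈ N \ F`. -/
def ThickStrongMixing (G : Type*) (X : Type*) [Group G] [TopologicalSpace G]
    [TopologicalSpace X] [MulAction G X] : Prop :=
  ∃ N : Set G, IsThick N ∧
    ∀ U V : Set X, IsOpen U → U.Nonempty → IsOpen V → V.Nonempty →
      ∃ F : Set G, IsCompact F ∧ F ⊆ N ∧ ∀ γ ∈ N \ F, ((γ • U) ∩ V).Nonempty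

/-- The system `(X, G)` is weak mixing: for all nonempty open `U₁, U₂, V₁, V₂ ⊆ X`
there is `γ ∈ G` with `γU₁ ∩ V₁ ≠ ∅` and `γU₂ ∩ V₂ ≠ ∅`. -/
def WeakMixing (G : Type*) (X : Type*) [Group G] [TopologicalSpace X] [MulAction G X] :
    Prop :=
  ∀ U₁ U₂ V₁ V₂ : Set X, IsOpen U₁ → U₁.Nonempty → IsOpen U₂ → U₂.Nonempty →
    IsOpen V₁ → V₁.Nonempty → IsOpen V₂ → V₂.Nonempty →
    ∃ γ : G, ((γ • U₁) ∩ V₁).Nonempty ∧ ((γ • U₂) ∩ V₂).Nonempty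

section Aux

variable {X Γ : Type*} [TopologicalSpace X] [CommGroup Γ] [MulAction Γ X]

omit [TopologicalSpace X] in
private lemma smul_conj_aux (γ δ : Γ) (s : Set X) : γ⁻¹ • (δ • (γ • s)) = δ • s := by
  rw [smul_smul, smul_smul]
  congr 1
  rw [mul_comm γ⁻¹ δ, mul_assoc, inv_mul_cancel, mul_one]

/-- The Furstenberg trick: for a weak mixing abelian action, any finite family of
`N(U,V)` sets contains a single `N(A,B)`. -/
private lemma wm_reduce [ContinuousConstSMul Γ X] (hwm : WeakMixing Γ X) :
    ∀ (l : List (Set X × Set X)) (p : Set X × Set X),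
      (∀ q ∈ p :: l, IsOpen q.1 ∧ q.1.Nonempty ∧ IsOpen q.2 ∧ q.2.Nonempty) →
      ∃ A B : Set X, IsOpen A ∧ A.Nonempty ∧ IsOpen B ∧ B.Nonempty ∧
        ∀ γ : Γ, ((γ • A) ∩ B).Nonempty → ∀ q ∈ p :: l, ((γ • q.1) ∩ q.2).Nonempty := by
  intro l
  induction l with
  | nil =>
    intro p h
    obtain ⟨h1, h2, h3, h4⟩ := h p List.mem_cons_self
    refine ⟨p.1, p.2, h1, h2, h3, h4, fun γ hγ q hq => ?_⟩
    rcases List.mem_cons.1 hq with rfl | hq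
    · exact hγ
    · exact absurd hq List.not_mem_nil
  | cons r l ih =>
    intro p h
    obtain ⟨A, B, hAo, hAne, hBo, hBne, hAB⟩ :=
      ih r (fun q hq => h q (List.mem_cons_of_mem _ hq))
    obtain ⟨h1, h2, h3, h4⟩ := h p List.mem_cons_self
    obtain ⟨γ₀, hγ₀1, hγ₀2⟩ := hwm p.1 p.2 A B h1 h2 h3 h4 hAo hAne hBo hBne
    refine ⟨(γ₀ • p.1) ∩ A, (γ₀ • p.2) ∩ B, (h1.smul γ₀).inter hAo, hγ₀1,
      (h3.smul γ₀).inter hBo, hγ₀2, fun γ hγ q hq => ?_⟩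
    rcases List.mem_cons.1 hq with rfl | hq
    · obtain ⟨y, hy1, hy2⟩ := hγ
      have hy1' : y ∈ γ • γ₀ • q.1 :=
        Set.smul_set_mono (Set.inter_subset_left (t := A)) hy1
      have hy2' : y ∈ γ₀ • q.2 := hy2.1
      refine ⟨γ₀⁻¹ • y, ?_, ?_⟩
      · have : γ₀⁻¹ • y ∈ γ₀⁻¹ • (γ • γ₀ • q.1) := Set.smul_mem_smul_set hy1'
        rwa [smul_conj_aux] at this
      · rwa [← Set.mem_smul_set_iff_inv_smul_mem]
    · refine hAB γ ?_ q hq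
      exact hγ.mono (Set.inter_subset_inter
        (Set.smul_set_mono (Set.inter_subset_right)) (Set.inter_subset_right))

/-- Finite transitivity from weak mixing, for abelian groups. -/
private lemma wm_trans [ContinuousConstSMul Γ X] (hwm : WeakMixing Γ X)
    (l : List (Set X × Set X))
    (h : ∀ q ∈ l, IsOpen q.1 ∧ q.1.Nonempty ∧ IsOpen q.2 ∧ q.2.Nonempty) :
    ∃ γ : Γ, ∀ q ∈ l, ((γ • q.1) ∩ q.2).Nonempty := by
  cases l with
  | nil => exact ⟨1, fun q hq => absurd hq List.not_mem_nil⟩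
  | cons p l =>
    obtain ⟨A, B, hAo, hAne, hBo, hBne, hAB⟩ := wm_reduce hwm l p h
    obtain ⟨γ, hγ, -⟩ := hwm A A B B hAo hAne hAo hAne hBo hBne hBo hBne
    exact ⟨γ, hAB γ hγ⟩

variable [TopologicalSpace Γ] [IsTopologicalGroup Γ] [ContinuousSMul Γ X]

/-- Continuity/compactness: finitely many nonempty open sets such that every translate
`k • V`, `k ∈ K`, contains one of them. -/
private lemma cover_lemma (K : Set Γ) (hK : IsCompact K) (V : Set X) (hV : IsOpen V)
    (hVne : V.Nonempty) :
    ∃ os : List (Set X), (∀ O ∈ os, IsOpen O ∧ O.Nonempty) ∧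
      ∀ k ∈ K, ∃ O ∈ os, O ⊆ k • V := by
  obtain ⟨v, hv⟩ := hVne
  have hcont : Continuous (fun p : Γ × X => p.1⁻¹ • p.2) :=
    continuous_fst.inv.smul continuous_snd
  have key : ∀ k₀ : Γ, ∃ W : Set Γ, ∃ O : Set X,
      IsOpen W ∧ k₀ ∈ W ∧ IsOpen O ∧ O.Nonempty ∧ ∀ k ∈ W, O ⊆ k • V := by
    intro k₀
    have hpre : IsOpen ((fun p : Γ × X => p.1⁻¹ • p.2) ⁻¹' V) := hV.preimage hcont
    have hmem : (k₀, k₀ • v) ∈ (fun p : Γ × X => p.1⁻¹ • p.2) ⁻¹' V := by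
      simp only [Set.mem_preimage, inv_smul_smul]
      exact hv
    rw [isOpen_prod_iff] at hpre
    obtain ⟨u, w, hu, hw, hk₀u, hvw, huw⟩ := hpre k₀ (k₀ • v) hmem
    refine ⟨u, w, hu, hk₀u, hw, ⟨k₀ • v, hvw⟩, fun k hk y hy => ?_⟩
    have hmem2 : (k, y) ∈ u ×ˢ w := ⟨hk, hy⟩
    have := huw hmem2
    rwa [Set.mem_smul_set_iff_inv_smul_mem]
  choose W O hWopen hmemW hOopen hOne hsub using key
  obtain ⟨t, -, hcov⟩ := hK.elim_nhds_subcover W (fun x _ => (hWopen x).mem_nhds (hmemW x))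
  refine ⟨t.toList.map O, ?_, ?_⟩
  · intro o ho
    obtain ⟨x, -, rfl⟩ := List.mem_map.1 ho
    exact ⟨hOopen x, hOne x⟩
  · intro k hk
    obtain ⟨x, hxt, hkW⟩ := Set.mem_iUnion₂.1 (hcov hk)
    exact ⟨O x, List.mem_map.2 ⟨x, Finset.mem_toList.2 hxt, rfl⟩, hsub x k hkW⟩

/-- The stage lemma: one group element works simultaneously against all translates of the
target sets by a compact set. -/
private lemma stage (hwm : WeakMixing Γ X) (K : Set Γ) (hK : IsCompact K)
    (l : List (Set X × Set X))
    (hl : ∀ q ∈ l, IsOpen q.1 ∧ q.1.Nonempty ∧ IsOpen q.2 ∧ q.2.Nonempty) :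
    ∃ x : Γ, ∀ p ∈ l, ∀ k ∈ K, ((x • p.1) ∩ (k • p.2)).Nonempty := by
  have red : ∀ l' : List (Set X × Set X),
      (∀ q ∈ l', IsOpen q.1 ∧ q.1.Nonempty ∧ IsOpen q.2 ∧ q.2.Nonempty) →
      ∃ l'' : List (Set X × Set X),
        (∀ q ∈ l'', IsOpen q.1 ∧ q.1.Nonempty ∧ IsOpen q.2 ∧ q.2.Nonempty) ∧
        ∀ x : Γ, (∀ q ∈ l'', ((x • q.1) ∩ q.2).Nonempty) →
          ∀ p ∈ l', ∀ k ∈ K, ((x • p.1) ∩ (k • p.2)).Nonempty := by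
    intro l'
    induction l' with
    | nil => exact fun _ => ⟨[], fun q hq => absurd hq List.not_mem_nil,
        fun x _ p hp => absurd hp List.not_mem_nil⟩
    | cons p l' ih =>
      intro h
      obtain ⟨l'', hl'', hprop⟩ := ih (fun q hq => h q (List.mem_cons_of_mem _ hq))
      obtain ⟨h1, h2, h3, h4⟩ := h p List.mem_cons_self
      obtain ⟨os, hos, hosK⟩ := cover_lemma K hK p.2 h3 h4
      refine ⟨os.map (fun O => (p.1, O)) ++ l'', ?_, ?_⟩
      · intro q hq
        rcases List.mem_append.1 hq with hq | hq
        · obtain ⟨O, hO, rfl⟩ := List.mem_map.1 hq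
          exact ⟨h1, h2, (hos O hO).1, (hos O hO).2⟩
        · exact hl'' q hq
      · intro x hx r hr k hk
        rcases List.mem_cons.1 hr with rfl | hr
        · obtain ⟨O, hO, hOsub⟩ := hosK k hk
          have := hx (r.1, O) (List.mem_append.2 (Or.inl (List.mem_map.2 ⟨O, hO, rfl⟩)))
          exact this.mono (Set.inter_subset_inter_right _ hOsub)
        · exact hprop x (fun q hq => hx q (List.mem_append.2 (Or.inr hq))) r hr k hk
  obtain ⟨l'', h1, h2⟩ := red l hl
  obtain ⟨γ, hγ⟩ := wm_trans hwm l'' h1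
  exact ⟨γ, h2 γ hγ⟩

end Aux

/-- For `X` a second countable Hausdorff space and `Γ` a second countable, locally compact,
Hausdorff, abelian topological group that is not compact, acting continuously on `X`:
`(X, Γ)` is weak mixing if and only if it is thick strong mixing. -/
theorem weakMixing_iff_thickStrongMixing_abelian {X Γ : Type*} [TopologicalSpace X]
    [T2Space X] [SecondCountableTopology X] [CommGroup Γ] [TopologicalSpace Γ]
    [IsTopologicalGroup Γ] [T2Space Γ] [SecondCountableTopology Γ] [LocallyCompactSpace Γ]
    (hnc : ¬ CompactSpace Γ) [MulAction Γ X] [ContinuousSMul Γ X] :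
    WeakMixing Γ X ↔ ThickStrongMixing Γ X := by
  constructor
  · intro hwm
    by_cases hX : ∃ U : Set X, IsOpen U ∧ U.Nonempty
    · -- main case
      obtain ⟨b, hbc, hbne, hbasis⟩ := TopologicalSpace.exists_countable_basis X
      have hbmem : ∀ s ∈ b, IsOpen s ∧ s.Nonempty := fun s hs =>
        ⟨hbasis.isOpen hs, Set.nonempty_iff_ne_empty.2 (fun he => hbne (he ▸ hs))⟩
      set S : Set (Set X × Set X) := b ×ˢ b with hS
      have hSc : S.Countable := hbc.prod hbc
      have hSne : S.Nonempty := by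
        obtain ⟨U, hU, x, hx⟩ := hX
        obtain ⟨u, hub, -, -⟩ := hbasis.exists_subset_of_mem_open hx hU
        exact ⟨(u, u), ⟨hub, hub⟩⟩
      obtain ⟨f, hf⟩ := hSc.exists_eq_range hSne
      have hfS : ∀ n, f n ∈ S := fun n => hf ▸ Set.mem_range_self n
      have hfprop : ∀ n, IsOpen (f n).1 ∧ (f n).1.Nonempty ∧ IsOpen (f n).2 ∧
          (f n).2.Nonempty := fun n =>
        ⟨(hbmem _ (hfS n).1).1, (hbmem _ (hfS n).1).2,
         (hbmem _ (hfS n).2).1, (hbmem _ (hfS n).2).2⟩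
      have hfind : ∀ U V : Set X, IsOpen U → U.Nonempty → IsOpen V → V.Nonempty →
          ∃ n, (f n).1 ⊆ U ∧ (f n).2 ⊆ V := by
        intro U V hU hUne hV hVne
        obtain ⟨x, hx⟩ := hUne
        obtain ⟨y, hy⟩ := hVne
        obtain ⟨u, hub, -, huU⟩ := hbasis.exists_subset_of_mem_open hx hU
        obtain ⟨w, hwb, -, hwV⟩ := hbasis.exists_subset_of_mem_open hy hV
        have : (u, w) ∈ S := ⟨hub, hwb⟩
        rw [hf] at this
        obtain ⟨n, hn⟩ := this
        exact ⟨n, by rw [hn]; exact huU, by rw [hn]; exact hwV⟩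
      let CE := CompactExhaustion.choice Γ
      let Kc : ℕ → Set Γ := fun n => (CE n ∪ (CE n)⁻¹) ∪ {1}
      have hKc : ∀ n, IsCompact (Kc n) :=
        fun n => ((CE.isCompact n).union (CE.isCompact n).inv).union isCompact_singleton
      have hKc1 : ∀ n, (1 : Γ) ∈ Kc n := fun n => Or.inr rfl
      have hKcsymm : ∀ n, ∀ γ ∈ Kc n, γ⁻¹ ∈ Kc n := by
        intro n γ hγ
        rcases hγ with (hγ | hγ) | hγ
        · exact Or.inl (Or.inr (by rwa [Set.mem_inv, inv_inv]))
        · exact Or.inl (Or.inl (by rwa [Set.mem_inv] at hγ))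
        · rw [Set.mem_singleton_iff] at hγ
          exact Or.inr (by rw [hγ, inv_one]; rfl)
      have hstage : ∀ n : ℕ, ∃ x : Γ, ∀ p ∈ (List.range (n + 1)).map f, ∀ k ∈ Kc n,
          ((x • p.1) ∩ (k • p.2)).Nonempty := by
        intro n
        refine stage hwm (Kc n) (hKc n) _ (fun q hq => ?_)
        obtain ⟨i, -, rfl⟩ := List.mem_map.1 hq
        exact hfprop i
      choose x hx using hstage
      let C : ℕ → Set Γ := fun n => (fun k => k * x n) '' (Kc n)
      have hCcomp : ∀ n, IsCompact (C n) :=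
        fun n => (hKc n).image (continuous_mul_right (x n))
      refine ⟨⋃ n, C n, ?_, ?_⟩
      · -- thickness
        intro F
        obtain ⟨n, hn⟩ := CE.exists_superset_of_isCompact F.finite_toSet.isCompact
        refine ⟨x n, Set.mem_iUnion.2 ⟨n, ⟨1, hKc1 n, one_mul _⟩⟩, ?_⟩
        rw [Set.mem_iInter₂]
        intro γ hγ
        rw [Set.mem_smul_set_iff_inv_smul_mem]
        refine Set.mem_iUnion.2 ⟨n, ⟨γ⁻¹, hKcsymm n γ (Or.inl (Or.inl (hn hγ))), ?_⟩⟩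
        simp [smul_eq_mul]
      · -- strong mixing along the thick set
        intro U V hU hUne hV hVne
        obtain ⟨i, hiU, hiV⟩ := hfind U V hU hUne hV hVne
        refine ⟨⋃ m ∈ Finset.range i, C m, ?_, ?_, ?_⟩
        · exact (Finset.range i).finite_toSet.isCompact_biUnion (fun m _ => hCcomp m)
        · exact Set.iUnion₂_subset (fun m _ => Set.subset_iUnion C m)
        · rintro γ ⟨hγN, hγF⟩
          obtain ⟨n, hn⟩ := Set.mem_iUnion.1 hγN
          have hni : i ≤ n := by
            by_contra hcon
            push_neg at hcon
            exact hγF (Set.mem_biUnion (Finset.mem_range.2 hcon) hn)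
          obtain ⟨k, hk, rfl⟩ := hn
          have hkinv : k⁻¹ ∈ Kc n := hKcsymm n k hk
          have hst := hx n (f i)
            (List.mem_map.2 ⟨i, List.mem_range.2 (Nat.lt_succ_of_le hni), rfl⟩) k⁻¹ hkinv
          obtain ⟨y, hy1, hy2⟩ := hst
          refine ⟨k • y, ?_, ?_⟩
          · have h5 : k • y ∈ k • (x n • (f i).1) := Set.smul_mem_smul_set hy1
            rw [smul_smul] at h5
            show k • y ∈ (k * x n) • U
            exact Set.smul_set_mono hiU h5
          · rw [Set.mem_smul_set_iff_inv_smul_mem] at hy2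
            rw [inv_inv] at hy2
            exact hiV hy2
    · -- degenerate case: no nonempty open set in X
      refine ⟨Set.univ, fun F => ⟨1, trivial, ?_⟩, fun U V hU hUne _ _ =>
        absurd ⟨U, hU, hUne⟩ hX⟩
      rw [Set.mem_iInter₂]
      intro γ _
      rw [Set.smul_set_univ]
      trivial
  · rintro ⟨N, hthick, hmix⟩ U₁ U₂ V₁ V₂ hU₁ hU₁ne hU₂ hU₂ne hV₁ hV₁ne hV₂ hV₂ne
    obtain ⟨F₁, hF₁c, -, h₁⟩ := hmix U₁ V₁ hU₁ hU₁ne hV₁ hV₁ne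
    obtain ⟨F₂, hF₂c, -, h₂⟩ := hmix U₂ V₂ hU₂ hU₂ne hV₂ hV₂ne
    have hex : ∃ γ ∈ N, γ ∉ F₁ ∪ F₂ := by
      by_contra hcon
      push_neg at hcon
      have hNC : N ⊆ F₁ ∪ F₂ := hcon
      have hC : IsCompact ((F₁ ∪ F₂) * (F₁ ∪ F₂)⁻¹) :=
        (hF₁c.union hF₂c).mul (hF₁c.union hF₂c).inv
      have hne_univ : (F₁ ∪ F₂) * (F₁ ∪ F₂)⁻¹ ≠ Set.univ := by
        intro heq
        exact hnc (isCompact_univ_iff.1 (heq ▸ hC))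
      obtain ⟨γ, hγ⟩ := Set.ne_univ_iff_exists_notMem _ |>.1 hne_univ
      obtain ⟨z, hzN, hz2⟩ := hthick {γ⁻¹}
      rw [Set.mem_iInter₂] at hz2
      have hz3 : z ∈ γ⁻¹ • N := hz2 γ⁻¹ (Finset.mem_singleton_self _)
      rw [Set.mem_smul_set_iff_inv_smul_mem, inv_inv, smul_eq_mul] at hz3
      refine hγ ⟨γ * z, hNC hz3, z⁻¹, Set.inv_mem_inv.2 (hNC hzN), ?_⟩
      show γ * z * z⁻¹ = γ
      rw [mul_assoc, mul_inv_cancel, mul_one]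
    obtain ⟨γ, hγN, hγF⟩ := hex
    exact ⟨γ, h₁ γ ⟨hγN, fun h => hγF (Or.inl h)⟩, h₂ γ ⟨hγN, fun h => hγF (Or.inr h)⟩⟩
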